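/- Let A be an infinite set of natural numbers, let n₀ be such that r(A, n) ≠ 1 for all integers n ≥ n₀, and let a₀ ∈ A with a₀ ≥ n₀. Then for every real number t ≥ a₀, the interval (t, 2t] contains an element of A. -/

import Mathlib

/-- For a set `A` of natural numbers, `r A n` is the number of solutions of
`n = a + b` with `a, b ∈ A`, `a ≤ b`. -/
noncomputable def addRep (A : Set ℕ) (n : ℕ) : ℕ :=
  Set.ncard {p : ℕ × ℕ | p.1 ∈ A ∧ p.2 ∈ A ∧ p.1 ≤ p.2 ∧ p.1 + p.2 = n}

theorem stmt_1 (A : Set ℕ) (hA : A.Infinite) (n₀ : ℕ)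
    (hr : ∀ n : ℕ, n₀ ≤ n → addRep A n ≠ 1)
    (a₀ : ℕ) (ha₀ : a₀ ∈ A) (ha₀n₀ : n₀ ≤ a₀) :
    ∀ t : ℝ, (a₀ : ℝ) ≤ t → ∃ a ∈ A, t < (a : ℝ) ∧ (a : ℝ) ≤ 2 * t := by
  intro t ht
  by_contra hcon
  push_neg at hcon
  have ht0 : (0:ℝ) ≤ t := le_trans (Nat.cast_nonneg _) ht
  set S : Set ℕ := {x | x ∈ A ∧ (x:ℝ) ≤ t} with hS
  have hSfin : S.Finite :=
    Set.Finite.subset (Set.finite_Iic ⌊t⌋₊) (fun x hx => Nat.le_floor hx.2)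
  have hSne : S.Nonempty := ⟨a₀, ha₀, ht⟩
  obtain ⟨a, haS, hamax⟩ := hSfin.exists_maximalFor id S hSne
  have hmax : ∀ b ∈ S, b ≤ a := by
    intro b hb
    by_contra hba
    push_neg at hba
    have := hamax (j := b) hb (le_of_lt hba)
    simp at this
    omega
  have ha₀a : a₀ ≤ a := hmax a₀ ⟨ha₀, ht⟩
  have haA : a ∈ A := haS.1
  have hat : (a:ℝ) ≤ t := haS.2
  -- the representation set of 2a
  set P : Set (ℕ × ℕ) := {p : ℕ × ℕ | p.1 ∈ A ∧ p.2 ∈ A ∧ p.1 ≤ p.2 ∧ p.1 + p.2 = 2 * a}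
  have hmem : (a, a) ∈ P := ⟨haA, haA, le_refl a, by ring⟩
  have hne : ∃ p ∈ P, p ≠ (a, a) := by
    by_contra h
    push_neg at h
    have hPeq : P = {(a, a)} := by
      apply Set.eq_singleton_iff_unique_mem.mpr
      exact ⟨hmem, h⟩
    have : addRep A (2 * a) = 1 := by
      unfold addRep
      rw [show {p : ℕ × ℕ | p.1 ∈ A ∧ p.2 ∈ A ∧ p.1 ≤ p.2 ∧ p.1 + p.2 = 2 * a} = P from rfl,
        hPeq, Set.ncard_singleton]
    exact hr (2 * a) (by omega) this
  obtain ⟨⟨b, c⟩, ⟨hbA, hcA, hbc, hsum⟩, hpne⟩ := hne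
  have hac : a < c := by
    by_contra h
    push_neg at h
    have hb : b = a := by omega
    have hc : c = a := by omega
    exact hpne (by simp [hb, hc])
  have hct : t < (c:ℝ) := by
    by_contra h
    push_neg at h
    exact absurd (hmax c ⟨hcA, h⟩) (by omega)
  have hc2t : (c:ℝ) ≤ 2 * t := by
    have : (c:ℝ) ≤ 2 * a := by
      have : c ≤ 2 * a := by omega
      exact_mod_cast this
    linarith
  exact absurd hc2t (not_le.mpr (hcon c hcA hct))
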